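/- Let p and q be probability distributions on a finite set S and let V : S → ℝ be any function. Then (E_{s~q}[V(s)] − E_{s~p}[V(s)])² ≤ 8·KL(p‖q)·Var_{s~p}[V] + 4√2·KL(p‖q)^{3/2}·MD_p[V]², where Var_p[V] is the variance of V under p and MD_p[V] = max_s |V(s) − E_{s~p}[V]|. -/

import Mathlib

open Finset Real

set_option maxHeartbeats 1600000 in
theorem mean_diff_sq_le_kl_var_md {S : Type*} [Fintype S] [Nonempty S]
    (p q : S → ℝ) (hp0 : ∀ s, 0 ≤ p s) (hp1 : ∑ s, p s = 1)
    (hq0 : ∀ s, 0 ≤ q s) (hq1 : ∑ s, q s = 1)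
    (habs : ∀ s, 0 < p s → 0 < q s)
    (V : S → ℝ) :
    ((∑ s, q s * V s) - ∑ s, p s * V s) ^ 2
      ≤ 8 * (∑ s, p s * Real.log (p s / q s))
            * (∑ s, p s * (V s - ∑ t, p t * V t) ^ 2)
        + 4 * Real.sqrt 2 * (∑ s, p s * Real.log (p s / q s)) ^ ((3 : ℝ) / 2)
            * (Finset.univ.sup' Finset.univ_nonempty
                (fun s => |V s - ∑ t, p t * V t|)) ^ 2 := by
  set μ := ∑ t, p t * V t with hμ
  obtain ⟨W, hWdef⟩ : ∃ W : S → ℝ, W = fun s => V s - μ := ⟨_, rfl⟩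
  set K := ∑ s, p s * Real.log (p s / q s) with hKdef
  set D := Finset.univ.sup' Finset.univ_nonempty (fun s => |V s - μ|) with hDdef
  set Var := ∑ s, p s * (V s - μ) ^ 2 with hVardef
  have hW : ∀ s, W s = V s - μ := fun s => by rw [hWdef]
  have hD : ∀ s, |W s| ≤ D := fun s => by
    rw [hW]; exact Finset.le_sup' (fun s => |V s - μ|) (mem_univ s)
  have hD0 : 0 ≤ D := (abs_nonneg _).trans (hD (Classical.arbitrary S))
  have hVar0 : 0 ≤ Var := Finset.sum_nonneg fun s _ =>
    mul_nonneg (hp0 s) (sq_nonneg _)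
  -- Hellinger quantity
  set H := ∑ s, (Real.sqrt (p s) - Real.sqrt (q s)) ^ 2 with hHdef
  have hH0 : 0 ≤ H := Finset.sum_nonneg fun s _ => sq_nonneg _
  -- pointwise: 2 p - 2 √(pq) ≤ p log(p/q)
  have hpt : ∀ s, 2 * p s - 2 * Real.sqrt (p s * q s) ≤ p s * Real.log (p s / q s) := by
    intro s
    rcases eq_or_lt_of_le (hp0 s) with h | h
    · simp [← h]
    · have hq := habs s h
      have hqp : 0 < q s / p s := div_pos hq h
      have h1 : Real.log (Real.sqrt (q s / p s)) ≤ Real.sqrt (q s / p s) - 1 :=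
        Real.log_le_sub_one_of_pos (Real.sqrt_pos.mpr hqp)
      rw [Real.log_sqrt hqp.le] at h1
      have h2 : Real.log (p s / q s) = - Real.log (q s / p s) := by
        rw [← Real.log_inv]
        congr 1
        field_simp
      have h3 : p s * Real.sqrt (q s / p s) = Real.sqrt (p s * q s) := by
        rw [Real.sqrt_div (hq0 s), Real.sqrt_mul (hp0 s)]
        have hsp : 0 < Real.sqrt (p s) := Real.sqrt_pos.mpr h
        have key : Real.sqrt (p s) * Real.sqrt (q s) * Real.sqrt (p s)
            = p s * Real.sqrt (q s) := by
          rw [mul_right_comm, Real.mul_self_sqrt (hp0 s)]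
        field_simp
        linarith [key, Real.sq_sqrt (hp0 s)]
      rw [h2]
      nlinarith [mul_le_mul_of_nonneg_left h1 h.le, h3]
  have hHK : H ≤ K := by
    have h1 : H = ∑ s, (p s + q s - 2 * Real.sqrt (p s * q s)) := by
      apply Finset.sum_congr rfl
      intro s _
      rw [sub_sq, Real.sq_sqrt (hp0 s), Real.sq_sqrt (hq0 s), Real.sqrt_mul (hp0 s)]
      ring
    have h2 : ∑ s, (2 * p s - 2 * Real.sqrt (p s * q s)) ≤ K :=
      Finset.sum_le_sum fun s _ => hpt s
    calc H = ∑ s, (2 * p s - 2 * Real.sqrt (p s * q s)) := by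
            rw [h1]
            rw [Finset.sum_sub_distrib, Finset.sum_sub_distrib, Finset.sum_add_distrib,
              hp1, hq1, ← Finset.mul_sum, ← Finset.mul_sum, hp1]
            ring
      _ ≤ K := h2
  have hK0 : 0 ≤ K := hH0.trans hHK
  have hsqHK : Real.sqrt H ≤ Real.sqrt K := Real.sqrt_le_sqrt hHK
  -- difference of means as a single sum
  have hΔ : (∑ s, q s * V s) - ∑ s, p s * V s
      = ∑ s, (Real.sqrt (q s) - Real.sqrt (p s)) * ((Real.sqrt (q s) + Real.sqrt (p s)) * W s) := by
    have step : ∀ s, (Real.sqrt (q s) - Real.sqrt (p s)) * ((Real.sqrt (q s) + Real.sqrt (p s)) * W s)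
        = q s * V s - p s * V s - (q s * μ - p s * μ) := by
      intro s
      have hqq : (Real.sqrt (q s) - Real.sqrt (p s)) * (Real.sqrt (q s) + Real.sqrt (p s))
          = q s - p s := by
        nlinarith [Real.sq_sqrt (hq0 s), Real.sq_sqrt (hp0 s)]
      calc (Real.sqrt (q s) - Real.sqrt (p s)) * ((Real.sqrt (q s) + Real.sqrt (p s)) * W s)
          = ((Real.sqrt (q s) - Real.sqrt (p s)) * (Real.sqrt (q s) + Real.sqrt (p s))) * W s := by ring
        _ = (q s - p s) * W s := by rw [hqq]
        _ = q s * V s - p s * V s - (q s * μ - p s * μ) := by rw [hW]; ring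
    rw [Finset.sum_congr rfl fun s _ => step s]
    rw [Finset.sum_sub_distrib, Finset.sum_sub_distrib, Finset.sum_sub_distrib,
      ← Finset.sum_mul, ← Finset.sum_mul, hp1, hq1]
    ring
  -- L1 distance bound
  have hL1 : ∑ s, |q s - p s| ≤ 2 * Real.sqrt H := by
    have cs := Finset.sum_mul_sq_le_sq_mul_sq Finset.univ
      (fun s => |Real.sqrt (q s) - Real.sqrt (p s)|)
      (fun s => Real.sqrt (q s) + Real.sqrt (p s))
    have heq : ∑ s, |Real.sqrt (q s) - Real.sqrt (p s)| * (Real.sqrt (q s) + Real.sqrt (p s))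
        = ∑ s, |q s - p s| := by
      apply Finset.sum_congr rfl
      intro s _
      have h1 : 0 ≤ Real.sqrt (q s) + Real.sqrt (p s) := by positivity
      rw [← abs_of_nonneg h1, ← abs_mul]
      congr 1
      nlinarith [Real.sq_sqrt (hq0 s), Real.sq_sqrt (hp0 s)]
    have h2 : ∑ s, |Real.sqrt (q s) - Real.sqrt (p s)| ^ 2 = H := by
      apply Finset.sum_congr rfl
      intro s _
      rw [sq_abs]
      ring
    have h3 : ∑ s, (Real.sqrt (q s) + Real.sqrt (p s)) ^ 2 ≤ 4 := by
      have : ∀ s, (Real.sqrt (q s) + Real.sqrt (p s)) ^ 2 ≤ 2 * q s + 2 * p s := by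
        intro s
        nlinarith [Real.sq_sqrt (hq0 s), Real.sq_sqrt (hp0 s), sq_nonneg (Real.sqrt (q s) - Real.sqrt (p s))]
      calc ∑ s, (Real.sqrt (q s) + Real.sqrt (p s)) ^ 2 ≤ ∑ s, (2 * q s + 2 * p s) :=
            Finset.sum_le_sum fun s _ => this s
        _ = 4 := by
            rw [Finset.sum_add_distrib, ← Finset.mul_sum, ← Finset.mul_sum, hp1, hq1]; norm_num
    have h4 : (∑ s, |q s - p s|) ^ 2 ≤ 4 * H := by
      rw [← heq]
      calc (∑ s, |Real.sqrt (q s) - Real.sqrt (p s)| * (Real.sqrt (q s) + Real.sqrt (p s))) ^ 2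
          ≤ (∑ s, |Real.sqrt (q s) - Real.sqrt (p s)| ^ 2) * ∑ s, (Real.sqrt (q s) + Real.sqrt (p s)) ^ 2 := cs
        _ ≤ H * 4 := by
            rw [h2]
            exact mul_le_mul_of_nonneg_left h3 hH0
        _ = 4 * H := by ring
    have h5 : 0 ≤ ∑ s, |q s - p s| := Finset.sum_nonneg fun s _ => abs_nonneg _
    have := (Real.le_sqrt h5 (by positivity)).mpr h4
    calc ∑ s, |q s - p s| ≤ Real.sqrt (4 * H) := this
      _ = 2 * Real.sqrt H := by
          rw [Real.sqrt_mul (by norm_num : (0:ℝ) ≤ 4),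
            show (4:ℝ) = 2 ^ 2 by norm_num, Real.sqrt_sq (by norm_num : (0:ℝ) ≤ 2)]
  -- second moment under q
  have hqW : ∑ s, q s * W s ^ 2 ≤ Var + 2 * Real.sqrt K * D ^ 2 := by
    have h1 : ∑ s, q s * W s ^ 2 - Var = ∑ s, (q s - p s) * W s ^ 2 := by
      rw [hVardef, ← Finset.sum_sub_distrib]
      apply Finset.sum_congr rfl
      intro s _
      rw [hW]; ring
    have h2 : ∑ s, (q s - p s) * W s ^ 2 ≤ 2 * Real.sqrt K * D ^ 2 := by
      calc ∑ s, (q s - p s) * W s ^ 2 ≤ ∑ s, |q s - p s| * D ^ 2 := by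
            apply Finset.sum_le_sum
            intro s _
            calc (q s - p s) * W s ^ 2 ≤ |q s - p s| * W s ^ 2 :=
                  mul_le_mul_of_nonneg_right (le_abs_self _) (sq_nonneg _)
              _ ≤ |q s - p s| * D ^ 2 := by
                  apply mul_le_mul_of_nonneg_left _ (abs_nonneg _)
                  calc W s ^ 2 = |W s| ^ 2 := (sq_abs _).symm
                    _ ≤ D ^ 2 := by nlinarith [hD s, abs_nonneg (W s)]
        _ = (∑ s, |q s - p s|) * D ^ 2 := by rw [← Finset.sum_mul]
        _ ≤ (2 * Real.sqrt H) * D ^ 2 :=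
            mul_le_mul_of_nonneg_right hL1 (sq_nonneg _)
        _ ≤ 2 * Real.sqrt K * D ^ 2 := by
            have : 2 * Real.sqrt H ≤ 2 * Real.sqrt K := by linarith
            exact mul_le_mul_of_nonneg_right this (sq_nonneg D)
    linarith [h1, h2]
  -- Cauchy–Schwarz on the main sum
  have hA : ∑ s, ((Real.sqrt (q s) + Real.sqrt (p s)) * W s) ^ 2
      ≤ 2 * (∑ s, q s * W s ^ 2) + 2 * Var := by
    have : ∀ s, ((Real.sqrt (q s) + Real.sqrt (p s)) * W s) ^ 2
        ≤ 2 * (q s * W s ^ 2) + 2 * (p s * W s ^ 2) := by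
      intro s
      have hab : (Real.sqrt (q s) + Real.sqrt (p s)) ^ 2 ≤ 2 * q s + 2 * p s := by
        nlinarith [Real.sq_sqrt (hq0 s), Real.sq_sqrt (hp0 s),
          sq_nonneg (Real.sqrt (q s) - Real.sqrt (p s))]
      calc ((Real.sqrt (q s) + Real.sqrt (p s)) * W s) ^ 2
          = (Real.sqrt (q s) + Real.sqrt (p s)) ^ 2 * W s ^ 2 := by ring
        _ ≤ (2 * q s + 2 * p s) * W s ^ 2 := mul_le_mul_of_nonneg_right hab (sq_nonneg _)
        _ = 2 * (q s * W s ^ 2) + 2 * (p s * W s ^ 2) := by ring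
    calc ∑ s, ((Real.sqrt (q s) + Real.sqrt (p s)) * W s) ^ 2
        ≤ ∑ s, (2 * (q s * W s ^ 2) + 2 * (p s * W s ^ 2)) :=
          Finset.sum_le_sum fun s _ => this s
      _ = 2 * (∑ s, q s * W s ^ 2) + 2 * Var := by
          rw [Finset.sum_add_distrib, ← Finset.mul_sum, ← Finset.mul_sum, hVardef]
          congr 2
          apply Finset.sum_congr rfl
          intro s _; rw [hW]
  have main : ((∑ s, q s * V s) - ∑ s, p s * V s) ^ 2
      ≤ K * (4 * Var + 4 * Real.sqrt K * D ^ 2) := by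
    rw [hΔ]
    have cs := Finset.sum_mul_sq_le_sq_mul_sq Finset.univ
      (fun s => Real.sqrt (q s) - Real.sqrt (p s))
      (fun s => (Real.sqrt (q s) + Real.sqrt (p s)) * W s)
    have hHH : ∑ s, (Real.sqrt (q s) - Real.sqrt (p s)) ^ 2 = H := by
      apply Finset.sum_congr rfl
      intro s _; ring
    rw [hHH] at cs
    have hA2 : ∑ s, ((Real.sqrt (q s) + Real.sqrt (p s)) * W s) ^ 2
        ≤ 4 * Var + 4 * Real.sqrt K * D ^ 2 := by
      have := hqW
      nlinarith [hA]
    calc (∑ s, (Real.sqrt (q s) - Real.sqrt (p s)) * ((Real.sqrt (q s) + Real.sqrt (p s)) * W s)) ^ 2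
        ≤ H * ∑ s, ((Real.sqrt (q s) + Real.sqrt (p s)) * W s) ^ 2 := cs
      _ ≤ H * (4 * Var + 4 * Real.sqrt K * D ^ 2) := by
          apply mul_le_mul_of_nonneg_left hA2 hH0
      _ ≤ K * (4 * Var + 4 * Real.sqrt K * D ^ 2) := by
          apply mul_le_mul_of_nonneg_right hHK
          positivity
  -- conclude
  have hKrpow : K ^ ((3:ℝ)/2) = K * Real.sqrt K := by
    rw [show ((3:ℝ)/2) = (3:ℝ) * (1/2) by norm_num, Real.rpow_mul hK0,
      ← Real.sqrt_eq_rpow, show (3:ℝ) = ((3:ℕ):ℝ) by norm_num, Real.rpow_natCast,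
      show K ^ (3:ℕ) = K^2 * K by ring, Real.sqrt_mul (sq_nonneg K), Real.sqrt_sq hK0]
  have hsqrt2 : (1:ℝ) ≤ Real.sqrt 2 := by
    rw [show (1:ℝ) = Real.sqrt 1 by simp]
    exact Real.sqrt_le_sqrt (by norm_num)
  calc ((∑ s, q s * V s) - ∑ s, p s * V s) ^ 2
      ≤ K * (4 * Var + 4 * Real.sqrt K * D ^ 2) := main
    _ = 4 * K * Var + 4 * (K * Real.sqrt K) * D ^ 2 := by ring
    _ ≤ 8 * K * Var + 4 * Real.sqrt 2 * K ^ ((3:ℝ)/2) * D ^ 2 := by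
        rw [hKrpow]
        have h1 : 4 * K * Var ≤ 8 * K * Var := by nlinarith
        have h2 : 4 * (K * Real.sqrt K) * D ^ 2 ≤ 4 * Real.sqrt 2 * (K * Real.sqrt K) * D ^ 2 := by
          have hKK : 0 ≤ K * Real.sqrt K := by positivity
          nlinarith [mul_nonneg hKK (sq_nonneg D), hsqrt2]
        linarith
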